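/- Let X be the one-point compactification of a Ψ-space (Mrówka–Isbell space) Ψ(𝓐) built from a non-maximal almost disjoint family 𝓐 of infinite subsets of ω with |𝓐| = 𝔠. Then X is a separable compact Hausdorff space with πχd(X) = ℵ₀ and χ(X) = 𝔠; hence 2^{c(X)·πχd(X)} = 𝔠 < 2^𝔠 = 2^{c(X)·χ(X)}. -/

import Mathlib

open Set Topology Cardinal

universe u

/-- A local π-base at `p`: a family of nonempty open sets such that every open
set containing `p` contains a member of the family. -/
def IsLocalPiBase {X : Type u} [TopologicalSpace X] (p : X) (𝓑 : Set (Set X)) : Prop :=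
  (∀ b ∈ 𝓑, IsOpen b ∧ b.Nonempty) ∧
  ∀ U : Set X, IsOpen U → p ∈ U → ∃ b ∈ 𝓑, b ⊆ U

/-- A family of sets is centered if it has the finite intersection property. -/
def Centered {X : Type u} (𝓑 : Set (Set X)) : Prop :=
  ∀ F : Finset (Set X), F.Nonempty → ↑F ⊆ 𝓑 → (⋂₀ (F : Set (Set X))).Nonempty

/-- A family of sets is linked if any two members meet. -/
def Linked {X : Type u} (𝓑 : Set (Set X)) : Prop :=
  ∀ b₁ ∈ 𝓑, ∀ b₂ ∈ 𝓑, (b₁ ∩ b₂).Nonempty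

/-- A decreasing local π-base at `p`, given as a ⊆-decreasing sequence of
nonempty open sets. -/
def IsDecreasingLocalPiBase {X : Type u} [TopologicalSpace X] (p : X) (A : ℕ → Set X) : Prop :=
  (∀ n, IsOpen (A n) ∧ (A n).Nonempty) ∧
  (∀ n, A (n + 1) ⊆ A n) ∧
  ∀ U : Set X, IsOpen U → p ∈ U → ∃ n, A n ⊆ U

/-- A cellular family: pairwise disjoint nonempty open sets. -/
def IsCellular {X : Type u} [TopologicalSpace X] (𝓒 : Set (Set X)) : Prop :=
  (∀ c ∈ 𝓒, IsOpen c ∧ c.Nonempty) ∧ 𝓒.PairwiseDisjoint id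

/-- A weak closed pseudobase at `p`: a family of open sets whose closures
intersect exactly in `{p}`. -/
def IsWeakClosedPseudobase {X : Type u} [TopologicalSpace X] (p : X) (𝓑 : Set (Set X)) : Prop :=
  (∀ b ∈ 𝓑, IsOpen b) ∧ (⋂ b ∈ 𝓑, closure b) = {p}

/-- A neighborhood base at `p` consisting of open sets containing `p`. -/
def IsNhdBase {X : Type u} [TopologicalSpace X] (p : X) (𝓑 : Set (Set X)) : Prop :=
  (∀ b ∈ 𝓑, IsOpen b ∧ p ∈ b) ∧
  ∀ U : Set X, IsOpen U → p ∈ U → ∃ b ∈ 𝓑, b ⊆ U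

/-- The least infinite cardinality of an open neighborhood base at `p`. -/
noncomputable def chiAt {X : Type u} [TopologicalSpace X] (p : X) : Cardinal.{u} :=
  sInf {c | ∃ 𝓑 : Set (Set X), IsNhdBase p 𝓑 ∧ #𝓑 = c} ⊔ ℵ₀

/-- The underlying set of the Ψ-space (Mrówka–Isbell space) over an almost
disjoint family `𝓐` of subsets of ℕ: the natural numbers together with one
point `x_A` for each `A ∈ 𝓐`. -/
def PsiSpace (𝓐 : Set (Set ℕ)) : Type := ℕ ⊕ ↥𝓐

/-- The Ψ-space topology: points of ℕ are isolated, and basic neighborhoods of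
`x_A` are `{x_A} ∪ (A \ F)` for finite `F`. -/
instance (𝓐 : Set (Set ℕ)) : TopologicalSpace (PsiSpace 𝓐) :=
  TopologicalSpace.generateFrom
    ({s : Set (PsiSpace 𝓐) | ∃ n : ℕ, s = {Sum.inl n}} ∪
     {s : Set (PsiSpace 𝓐) | ∃ (A : ↥𝓐) (F : Finset ℕ),
        s = insert (Sum.inr A) (Sum.inl '' ((A : Set ℕ) \ ↑F))})

open scoped OnePoint

namespace PsiAux

variable {𝓐 : Set (Set ℕ)}

/-- inclusion of the isolated points, with the `PsiSpace` topology pinned. -/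
def pl (𝓐 : Set (Set ℕ)) (n : ℕ) : PsiSpace 𝓐 := Sum.inl n

/-- inclusion of the a.d.-family points, with the `PsiSpace` topology pinned. -/
def pr {𝓐 : Set (Set ℕ)} (A : ↥𝓐) : PsiSpace 𝓐 := Sum.inr A

lemma pl_injective : Function.Injective (pl 𝓐) := fun a b h => Sum.inl.inj h

lemma pr_injective : Function.Injective (pr (𝓐 := 𝓐)) := fun a b h =>
  Sum.inr.inj h

@[simp] lemma pl_ne_pr (n : ℕ) (A : ↥𝓐) : pl 𝓐 n ≠ pr A := fun h => by
  simpa [pl, pr] using h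

@[simp] lemma pr_eq_pr {A B : ↥𝓐} : pr A = pr B ↔ A = B :=
  ⟨fun h => Sum.inr.inj h, fun h => by rw [h]⟩

@[simp] lemma pl_eq_pl {n m : ℕ} : pl 𝓐 n = pl 𝓐 m ↔ n = m :=
  ⟨fun h => Sum.inl.inj h, fun h => by rw [h]⟩

/-- basic neighborhoods -/
def bs (A : ↥𝓐) (F : Finset ℕ) : Set (PsiSpace 𝓐) :=
  insert (pr A) (pl 𝓐 '' ((A : Set ℕ) \ ↑F))

def gens (𝓐 : Set (Set ℕ)) : Set (Set (PsiSpace 𝓐)) :=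
  {s : Set (PsiSpace 𝓐) | ∃ n : ℕ, s = {pl 𝓐 n}} ∪
  {s : Set (PsiSpace 𝓐) | ∃ (A : ↥𝓐) (F : Finset ℕ), s = bs A F}

lemma topo_eq : (inferInstance : TopologicalSpace (PsiSpace 𝓐)) =
    TopologicalSpace.generateFrom (gens 𝓐) := rfl

lemma isOpen_singleton_pl (n : ℕ) : IsOpen ({pl 𝓐 n} : Set (PsiSpace 𝓐)) :=
  TopologicalSpace.isOpen_generateFrom_of_mem (Or.inl ⟨n, rfl⟩)

lemma isOpen_bs (A : ↥𝓐) (F : Finset ℕ) : IsOpen (bs A F) :=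
  TopologicalSpace.isOpen_generateFrom_of_mem (Or.inr ⟨A, F, rfl⟩)

lemma nhds_pl (n : ℕ) : 𝓝 (pl 𝓐 n) = pure (pl 𝓐 n) :=
  le_antisymm (Filter.le_pure_iff.2 ((isOpen_singleton_pl n).mem_nhds rfl)) (pure_le_nhds _)

lemma hasBasis_nhds_pr (A : ↥𝓐) :
    (𝓝 (pr A)).HasBasis (fun _ : Finset ℕ => True) (fun F => bs A F) := by
  have h1 : {s : Set (PsiSpace 𝓐) | pr A ∈ s ∧ s ∈ gens 𝓐} = Set.range (bs A) := by
    ext s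
    constructor
    · rintro ⟨hmem, (⟨n, rfl⟩ | ⟨B, F, rfl⟩)⟩
      · exact absurd (Set.mem_singleton_iff.1 hmem).symm (pl_ne_pr n A)
      · rcases hmem with h | ⟨m, _, h⟩
        · obtain rfl : B = A := pr_eq_pr.1 h.symm
          exact ⟨F, rfl⟩
        · exact absurd h (pl_ne_pr m A)
    · rintro ⟨F, rfl⟩
      exact ⟨mem_insert _ _, Or.inr ⟨A, F, rfl⟩⟩
  have h2 : 𝓝 (pr A) = ⨅ F : Finset ℕ, Filter.principal (bs A F) := by
    have h0 : 𝓝 (pr A) =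
        ⨅ s ∈ {s : Set (PsiSpace 𝓐) | pr A ∈ s ∧ s ∈ gens 𝓐}, Filter.principal s :=
      TopologicalSpace.nhds_generateFrom
    rw [h0, h1, iInf_range]
  rw [h2]
  apply Filter.hasBasis_iInf_principal
  intro F G
  refine ⟨F ∪ G, ?_, ?_⟩ <;>
  · apply insert_subset_insert
    apply image_mono
    apply diff_subset_diff_right
    simp only [Finset.coe_union]
    first
    | exact subset_union_left
    | exact subset_union_right

lemma mem_nhds_pr {A : ↥𝓐} {U : Set (PsiSpace 𝓐)} :
    U ∈ 𝓝 (pr A) ↔ ∃ F : Finset ℕ, bs A F ⊆ U := by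
  simp [(hasBasis_nhds_pr A).mem_iff]


lemma bs_subset_bs {A : ↥𝓐} {F G : Finset ℕ} (h : F ⊆ G) : bs A G ⊆ bs A F :=
  insert_subset_insert (image_mono (diff_subset_diff_right (by exact_mod_cast h)))

lemma mem_bs_iff {A : ↥𝓐} {F : Finset ℕ} {x : PsiSpace 𝓐} :
    x ∈ bs A F ↔ x = pr A ∨ ∃ m : ℕ, m ∈ (A : Set ℕ) ∧ m ∉ F ∧ x = pl 𝓐 m := by
  simp only [bs, mem_insert_iff, mem_image, mem_diff, Finset.mem_coe]
  constructor
  · rintro (h | ⟨m, ⟨h1, h2⟩, rfl⟩)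
    · exact Or.inl h
    · exact Or.inr ⟨m, h1, h2, rfl⟩
  · rintro (h | ⟨m, h1, h2, rfl⟩)
    · exact Or.inl h
    · exact Or.inr ⟨m, ⟨h1, h2⟩, rfl⟩

/-- the Ψ-space is Hausdorff -/
lemma t2 (had : 𝓐.Pairwise fun A B => (A ∩ B).Finite) : T2Space (PsiSpace 𝓐) := by
  constructor
  intro x y hxy
  match x, y with
  | Sum.inl n, Sum.inl m =>
    refine ⟨{pl 𝓐 n}, {pl 𝓐 m}, isOpen_singleton_pl n, isOpen_singleton_pl m, rfl, rfl, ?_⟩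
    simp only [disjoint_singleton]
    exact fun h => hxy (by exact_mod_cast h)
  | Sum.inl n, Sum.inr A =>
    refine ⟨{pl 𝓐 n}, bs A {n}, isOpen_singleton_pl n, isOpen_bs A {n}, rfl,
      mem_insert _ _, ?_⟩
    rw [disjoint_left]
    rintro a ha hb
    rw [mem_singleton_iff] at ha
    subst ha
    rcases mem_bs_iff.1 hb with h | ⟨m, _, hm2, h⟩
    · exact pl_ne_pr n A h
    · obtain rfl : n = m := pl_eq_pl.1 h
      exact hm2 (Finset.mem_singleton_self n)
  | Sum.inr A, Sum.inl n =>
    refine ⟨bs A {n}, {pl 𝓐 n}, isOpen_bs A {n}, isOpen_singleton_pl n,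
      mem_insert _ _, rfl, ?_⟩
    rw [disjoint_right]
    rintro a ha hb
    rw [mem_singleton_iff] at ha
    subst ha
    rcases mem_bs_iff.1 hb with h | ⟨m, _, hm2, h⟩
    · exact pl_ne_pr n A h
    · obtain rfl : n = m := pl_eq_pl.1 h
      exact hm2 (Finset.mem_singleton_self n)
  | Sum.inr A, Sum.inr B =>
    have hAB : A ≠ B := fun h => hxy (by rw [h])
    have hfin : ((A : Set ℕ) ∩ (B : Set ℕ)).Finite :=
      had A.2 B.2 (fun h => hAB (Subtype.ext h))
    refine ⟨bs A hfin.toFinset, bs B hfin.toFinset, isOpen_bs _ _, isOpen_bs _ _,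
      mem_insert _ _, mem_insert _ _, ?_⟩
    rw [disjoint_left]
    rintro a ha hb
    rcases mem_bs_iff.1 ha with h | ⟨m, hm1, hm2, rfl⟩
    · subst h
      rcases mem_bs_iff.1 hb with h | ⟨m, _, _, h⟩
      · exact hAB (pr_eq_pr.1 h)
      · exact absurd h.symm (pl_ne_pr m A)
    · rcases mem_bs_iff.1 hb with h | ⟨k, hk1, _, h⟩
      · exact pl_ne_pr m B h
      · obtain rfl : k = m := pl_eq_pl.1 h.symm
        exact hm2 (by simp [hfin] ; exact ⟨hm1, hk1⟩)

/-- a set with a point whose every neighborhood contains all but finitely many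
points of the set is compact -/
lemma isCompact_of_nhd_cofinite {X : Type*} [TopologicalSpace X] {K : Set X} {p : X}
    (hp : p ∈ K) (h : ∀ U ∈ 𝓝 p, (K \ U).Finite) : IsCompact K := by
  rw [isCompact_iff_ultrafilter_le_nhds]
  intro f hf
  by_cases hfp : ↑f ≤ 𝓝 p
  · exact ⟨p, hp, hfp⟩
  · obtain ⟨U, hU, hUf⟩ : ∃ U ∈ 𝓝 p, U ∉ f := by
      simpa [Filter.le_def] using hfp
    have h1 : K \ U ∈ f := by
      have h2 : Uᶜ ∈ f := Ultrafilter.compl_mem_iff_notMem.2 hUf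
      have hK : K ∈ f := Filter.le_principal_iff.mp hf
      rw [diff_eq]
      exact Filter.inter_mem hK h2
    obtain ⟨x, hx, rfl⟩ := Ultrafilter.eq_pure_of_finite_mem (h U hU) h1
    exact ⟨x, hx.1, pure_le_nhds x⟩

lemma isCompact_bs (A : ↥𝓐) (F : Finset ℕ) : IsCompact (bs A F) := by
  apply isCompact_of_nhd_cofinite (mem_insert _ _)
  intro U hU
  obtain ⟨G, hG⟩ := mem_nhds_pr.1 hU
  apply Set.Finite.subset ((G : Set ℕ).toFinite.image (pl 𝓐))
  rintro x ⟨hx, hxU⟩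
  rcases mem_bs_iff.1 hx with rfl | ⟨m, hm1, hm2, rfl⟩
  · exact absurd (hG (mem_insert _ _)) hxU
  · refine ⟨m, ?_, rfl⟩
    by_contra hmG
    exact hxU (hG (mem_bs_iff.2 (Or.inr ⟨m, hm1, hmG, rfl⟩)))

lemma isClosed_bs0 (had : 𝓐.Pairwise fun A B => (A ∩ B).Finite) (A : ↥𝓐) :
    IsClosed (bs A ∅) := by
  rw [← isOpen_compl_iff, isOpen_iff_mem_nhds]
  intro x hx
  match x with
  | Sum.inl n =>
    have hn : n ∉ (A : Set ℕ) := by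
      intro hn
      exact hx (mem_bs_iff.2 (Or.inr ⟨n, hn, by simp, rfl⟩))
    rw [show (Sum.inl n : PsiSpace 𝓐) = pl 𝓐 n from rfl, nhds_pl]
    intro h
    rcases mem_bs_iff.1 h with h' | ⟨m, hm1, _, h'⟩
    · exact pl_ne_pr n A h'
    · exact hn ((pl_eq_pl.1 h') ▸ hm1)
  | Sum.inr B =>
    have hBA : B ≠ A := by
      rintro rfl
      exact hx (mem_insert _ _)
    have hfin : ((A : Set ℕ) ∩ (B : Set ℕ)).Finite :=
      had A.2 B.2 (fun h => hBA (Subtype.ext h.symm))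
    rw [show (Sum.inr B : PsiSpace 𝓐) = pr B from rfl, mem_nhds_pr]
    refine ⟨hfin.toFinset, ?_⟩
    intro y hy hybs
    rcases mem_bs_iff.1 hy with rfl | ⟨m, hm1, hm2, rfl⟩
    · rcases mem_bs_iff.1 hybs with h | ⟨m, _, _, h⟩
      · exact hBA (pr_eq_pr.1 h)
      · exact pl_ne_pr m B h.symm
    · rcases mem_bs_iff.1 hybs with h | ⟨k, hk1, _, h⟩
      · exact pl_ne_pr m A h
      · obtain rfl : k = m := pl_eq_pl.1 h.symm
        exact hm2 (by simp [hfin]; exact ⟨hk1, hm1⟩)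

lemma weaklyLocallyCompact : WeaklyLocallyCompactSpace (PsiSpace 𝓐) := by
  constructor
  intro x
  match x with
  | Sum.inl n =>
    exact ⟨{pl 𝓐 n}, isCompact_singleton, by
      rw [show (Sum.inl n : PsiSpace 𝓐) = pl 𝓐 n from rfl, nhds_pl]; rfl⟩
  | Sum.inr A =>
    exact ⟨bs A ∅, isCompact_bs A ∅, by
      rw [show (Sum.inr A : PsiSpace 𝓐) = pr A from rfl, mem_nhds_pr]
      exact ⟨∅, subset_rfl⟩⟩

/-- every compact set is covered by finitely many basic sets -/
lemma compact_subset {K : Set (PsiSpace 𝓐)} (hK : IsCompact K) :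
    ∃ (Φ : Finset ↥𝓐) (F : Finset ℕ),
      K ⊆ (⋃ A ∈ Φ, bs A ∅) ∪ (pl 𝓐 '' ↑F) := by
  classical
  have hcov : K ⊆ ⋃ i : PsiSpace 𝓐,
      (Sum.elim (fun n => ({pl 𝓐 n} : Set (PsiSpace 𝓐))) (fun A => bs A ∅)) i := by
    intro x _
    match x with
    | Sum.inl n => exact mem_iUnion.2 ⟨Sum.inl n, rfl⟩
    | Sum.inr A => exact mem_iUnion.2 ⟨Sum.inr A, mem_insert _ _⟩
  have hopen : ∀ i : PsiSpace 𝓐, IsOpen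
      ((Sum.elim (fun n => ({pl 𝓐 n} : Set (PsiSpace 𝓐))) (fun A => bs A ∅)) i) := by
    rintro (n | A)
    · exact isOpen_singleton_pl n
    · exact isOpen_bs A ∅
  obtain ⟨t, ht⟩ := hK.elim_finite_subcover _ hopen hcov
  refine ⟨t.filterMap (fun i => Sum.getRight? i) (by
      rintro (a|a) (b|b) c hc hc' <;> simp_all), 
    t.filterMap (fun i => Sum.getLeft? i) (by
      rintro (a|a) (b|b) c hc hc' <;> simp_all), ?_⟩
  intro x hx
  obtain ⟨i, hit, hxi⟩ := mem_iUnion₂.1 (ht hx)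
  match i with
  | Sum.inl n =>
    right
    refine ⟨n, ?_, (mem_singleton_iff.1 hxi).symm ▸ rfl⟩
    simp only [Finset.mem_coe, Finset.mem_filterMap]
    exact (Finset.mem_filterMap _).2 ⟨Sum.inl n, hit, rfl⟩
  | Sum.inr A =>
    left
    refine mem_iUnion₂.2 ⟨A, ?_, hxi⟩
    exact (Finset.mem_filterMap _).2 ⟨Sum.inr A, hit, rfl⟩


lemma finite_pr_of_compact {K : Set (PsiSpace 𝓐)} (hK : IsCompact K) :
    {A : ↥𝓐 | pr A ∈ K}.Finite := by
  obtain ⟨Φ, F, hsub⟩ := compact_subset hK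
  apply Φ.finite_toSet.subset
  intro A hA
  rcases hsub hA with h | ⟨m, _, h⟩
  · obtain ⟨B, hB, hmem⟩ := mem_iUnion₂.1 h
    rcases mem_bs_iff.1 hmem with h' | ⟨m, _, _, h'⟩
    · exact (pr_eq_pr.1 h') ▸ hB
    · exact absurd h'.symm (pl_ne_pr m A)
  · exact absurd h (pl_ne_pr m A)

lemma finite_trace_of_compact {K : Set (PsiSpace 𝓐)} (hK : IsCompact K) {C : Set ℕ}
    (hC : ∀ A ∈ 𝓐, (C ∩ A).Finite) :
    {n : ℕ | n ∈ C ∧ pl 𝓐 n ∈ K}.Finite := by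
  obtain ⟨Φ, F, hsub⟩ := compact_subset hK
  have hsub2 : {n : ℕ | n ∈ C ∧ pl 𝓐 n ∈ K} ⊆ (⋃ A ∈ Φ, C ∩ (A : Set ℕ)) ∪ ↑F := by
    rintro n ⟨hnC, hnK⟩
    rcases hsub hnK with h | ⟨m, hm, h⟩
    · obtain ⟨B, hB, hmem⟩ := mem_iUnion₂.1 h
      rcases mem_bs_iff.1 hmem with h' | ⟨m, hm1, _, h'⟩
      · exact absurd h' (pl_ne_pr n B)
      · obtain rfl : n = m := pl_eq_pl.1 h'
        exact Or.inl (mem_iUnion₂.2 ⟨B, hB, ⟨hnC, hm1⟩⟩)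
    · obtain rfl : m = n := pl_eq_pl.1 h
      exact Or.inr hm
  exact ((Φ.finite_toSet.biUnion (fun A _ => hC A A.2)).union F.finite_toSet).subset hsub2

/-- the coerced isolated points together with ∞ are dense in the one-point
compactification -/
lemma dense_iso (hinf : ∀ A ∈ 𝓐, A.Infinite) :
    Dense (insert (∞ : OnePoint (PsiSpace 𝓐))
      (Set.range fun n : ℕ => ((pl 𝓐 n : PsiSpace 𝓐) : OnePoint (PsiSpace 𝓐)))) := by
  rw [dense_iff_inter_open]
  rintro U hU ⟨x, hx⟩
  induction x using OnePoint.rec with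
  | infty => exact ⟨∞, hx, mem_insert _ _⟩
  | coe y =>
    have hpre : IsOpen (((↑) : PsiSpace 𝓐 → OnePoint (PsiSpace 𝓐)) ⁻¹' U) :=
      (OnePoint.isOpen_def.1 hU).2
    match y with
    | Sum.inl n =>
      exact ⟨((pl 𝓐 n : PsiSpace 𝓐) : OnePoint (PsiSpace 𝓐)), hx, Or.inr ⟨n, rfl⟩⟩
    | Sum.inr A =>
      have hy : (pr A : PsiSpace 𝓐) ∈ (↑) ⁻¹' U := hx
      obtain ⟨F, hF⟩ := mem_nhds_pr.1 (hpre.mem_nhds hy)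
      obtain ⟨m, hm⟩ := ((hinf A A.2).diff (F.finite_toSet)).nonempty
      refine ⟨((pl 𝓐 m : PsiSpace 𝓐) : OnePoint (PsiSpace 𝓐)), ?_, Or.inr ⟨m, rfl⟩⟩
      exact hF (mem_bs_iff.2 (Or.inr ⟨m, hm.1, hm.2, rfl⟩))

/-- a separable space is ccc -/
lemma ccc_of_separable {X : Type u} [TopologicalSpace X] [TopologicalSpace.SeparableSpace X]
    (𝓒 : Set (Set X)) (h : IsCellular 𝓒) : 𝓒.Countable := by
  obtain ⟨D, hDc, hDd⟩ := TopologicalSpace.exists_countable_dense X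
  have hch : ∀ c : ↥𝓒, ∃ x, x ∈ (c : Set X) ∩ D := fun c =>
    (hDd.inter_open_nonempty c (h.1 c c.2).1 (h.1 c c.2).2)
  choose f hf using hch
  have hinj : Function.Injective f := by
    intro c1 c2 hno
    by_contra hne
    have hd := h.2 c1.2 c2.2 (fun h' => hne (Subtype.ext h'))
    exact Set.disjoint_left.1 hd (hf c1).1 (hno ▸ (hf c2).1)
  haveI : Countable ↥D := hDc.to_subtype
  haveI : Countable ↥𝓒 := by
    have : Function.Injective (fun c : ↥𝓒 => (⟨f c, (hf c).2⟩ : ↥D)) := by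
      intro c1 c2 hcc
      exact hinj (by simpa using hcc)
    exact this.countable
  exact Set.countable_coe_iff.mp inferInstance

/-- the basic closed compact pieces in the Ψ-space -/
def MM (Φ : Finset ↥𝓐) (F : Finset ℕ) : Set (PsiSpace 𝓐) :=
  (⋃ A ∈ Φ, bs A ∅) ∪ (pl 𝓐 '' ↑F)

lemma isCompact_MM (Φ : Finset ↥𝓐) (F : Finset ℕ) : IsCompact (MM Φ F) :=
  ((Φ.finite_toSet.isCompact_biUnion (fun A _ => isCompact_bs A ∅)).union
    (((F : Set ℕ).toFinite.image (pl 𝓐)).isCompact))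

lemma isClosed_MM (had : 𝓐.Pairwise fun A B => (A ∩ B).Finite)
    (Φ : Finset ↥𝓐) (F : Finset ℕ) : IsClosed (MM Φ F) := by
  haveI := t2 (𝓐 := 𝓐) had
  exact ((Φ.finite_toSet.isClosed_biUnion (fun A _ => isClosed_bs0 had A)).union
    (((F : Set ℕ).toFinite.image (pl 𝓐)).isClosed))

/-- basic neighborhoods of ∞ -/
def NN (Φ : Finset ↥𝓐) (F : Finset ℕ) : Set (OnePoint (PsiSpace 𝓐)) :=
  insert ∞ (((↑) : PsiSpace 𝓐 → OnePoint (PsiSpace 𝓐)) '' (MM Φ F)ᶜ)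

lemma preimage_insert_infty {X : Type u} [TopologicalSpace X] (s : Set X) :
    (((↑) : X → OnePoint X) ⁻¹' (insert (∞ : OnePoint X) ((↑) '' s))) = s := by
  ext x
  simp

lemma isOpen_NN (had : 𝓐.Pairwise fun A B => (A ∩ B).Finite)
    (Φ : Finset ↥𝓐) (F : Finset ℕ) : IsOpen (NN Φ F) := by
  rw [NN, OnePoint.isOpen_iff_of_mem (mem_insert _ _), preimage_insert_infty, compl_compl]
  exact ⟨isClosed_MM had Φ F, isCompact_MM Φ F⟩

lemma infty_mem_NN (Φ : Finset ↥𝓐) (F : Finset ℕ) : ∞ ∈ NN Φ F := mem_insert _ _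

lemma exists_NN_subset {U : Set (OnePoint (PsiSpace 𝓐))} (hU : IsOpen U) (hmem : ∞ ∈ U) :
    ∃ (Φ : Finset ↥𝓐) (F : Finset ℕ), NN Φ F ⊆ U := by
  have hK : IsCompact (((↑) : PsiSpace 𝓐 → OnePoint (PsiSpace 𝓐)) ⁻¹' U)ᶜ :=
    ((OnePoint.isOpen_iff_of_mem' hmem).1 hU).1
  obtain ⟨Φ, F, hsub⟩ := compact_subset hK
  refine ⟨Φ, F, ?_⟩
  rintro x (rfl | ⟨y, hy, rfl⟩)
  · exact hmem
  · have : y ∈ (↑) ⁻¹' U := by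
      by_contra hc
      exact hy (hsub hc)
    exact this


lemma isOpen_pl_image (s : Set ℕ) : IsOpen (pl 𝓐 '' s) := by
  rw [Set.image_eq_iUnion]
  exact isOpen_biUnion (fun n _ => isOpen_singleton_pl n)

/-- decreasing local π-base at ∞ -/
lemma decreasingPiBase_infty {C : Set ℕ} (hCinf : C.Infinite)
    (hC : ∀ A ∈ 𝓐, (C ∩ A).Finite) :
    IsDecreasingLocalPiBase (∞ : OnePoint (PsiSpace 𝓐))
      (fun k => ((↑) : PsiSpace 𝓐 → OnePoint (PsiSpace 𝓐)) '' (pl 𝓐 '' (C ∩ Ici k))) := by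
  refine ⟨fun k => ⟨?_, ?_⟩, fun k => ?_, fun U hU hmem => ?_⟩
  · exact OnePoint.isOpen_image_coe.2 (isOpen_pl_image _)
  · obtain ⟨b, hb, hkb⟩ := hCinf.exists_gt k
    exact ⟨_, ⟨pl 𝓐 b, ⟨b, ⟨hb, le_of_lt hkb⟩, rfl⟩, rfl⟩⟩
  · exact image_mono (image_mono (inter_subset_inter_right _ (fun x hx => le_trans (Nat.le_succ k) hx)))
  · have hK : IsCompact (((↑) : PsiSpace 𝓐 → OnePoint (PsiSpace 𝓐)) ⁻¹' U)ᶜ :=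
      ((OnePoint.isOpen_iff_of_mem' hmem).1 hU).1
    have hfin := finite_trace_of_compact hK hC
    obtain ⟨k, hk⟩ := hfin.bddAbove
    refine ⟨k + 1, ?_⟩
    rintro x ⟨y, ⟨n, ⟨hnC, hnk⟩, rfl⟩, rfl⟩
    have hnk' : k + 1 ≤ n := hnk
    have : pl 𝓐 n ∉ (((↑) : PsiSpace 𝓐 → OnePoint (PsiSpace 𝓐)) ⁻¹' U)ᶜ := by
      intro hmem2
      exact absurd (hk ⟨hnC, hmem2⟩) (by omega)
    simpa using not_not.1 this

/-- decreasing local π-base at an isolated point -/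
lemma decreasingPiBase_pl (n : ℕ) :
    IsDecreasingLocalPiBase ((pl 𝓐 n : PsiSpace 𝓐) : OnePoint (PsiSpace 𝓐))
      (fun _ => {((pl 𝓐 n : PsiSpace 𝓐) : OnePoint (PsiSpace 𝓐))}) := by
  refine ⟨fun k => ⟨?_, singleton_nonempty _⟩, fun k => subset_rfl, fun U hU hmem => ?_⟩
  · rw [← Set.image_singleton]
    exact OnePoint.isOpen_image_coe.2 (isOpen_singleton_pl n)
  · exact ⟨0, singleton_subset_iff.2 hmem⟩

/-- decreasing local π-base (in fact neighborhood base) at a point of the a.d. family -/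
lemma decreasingPiBase_pr (A : ↥𝓐) :
    IsDecreasingLocalPiBase ((pr A : PsiSpace 𝓐) : OnePoint (PsiSpace 𝓐))
      (fun k => ((↑) : PsiSpace 𝓐 → OnePoint (PsiSpace 𝓐)) '' bs A (Finset.range k)) := by
  refine ⟨fun k => ⟨OnePoint.isOpen_image_coe.2 (isOpen_bs A _), ⟨_, ⟨pr A, mem_insert _ _, rfl⟩⟩⟩,
    fun k => image_mono (bs_subset_bs (by simp [Finset.range_subset]; intro x hx; omega)), fun U hU hmem => ?_⟩
  have hpre : IsOpen (((↑) : PsiSpace 𝓐 → OnePoint (PsiSpace 𝓐)) ⁻¹' U) :=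
    (OnePoint.isOpen_def.1 hU).2
  obtain ⟨F, hF⟩ := mem_nhds_pr.1 (hpre.mem_nhds hmem)
  obtain ⟨k, hk⟩ := F.exists_nat_subset_range
  refine ⟨k, ?_⟩
  intro x hx
  obtain ⟨y, hy, rfl⟩ := hx
  exact hF (bs_subset_bs hk hy)

/-- neighborhood base at a point of the a.d. family -/
lemma nhdBase_pr (A : ↥𝓐) :
    IsNhdBase ((pr A : PsiSpace 𝓐) : OnePoint (PsiSpace 𝓐))
      (Set.range fun k : ℕ => ((↑) : PsiSpace 𝓐 → OnePoint (PsiSpace 𝓐)) '' bs A (Finset.range k)) := by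
  constructor
  · rintro b ⟨k, rfl⟩
    exact ⟨OnePoint.isOpen_image_coe.2 (isOpen_bs A _), ⟨pr A, mem_insert _ _, rfl⟩⟩
  · intro U hU hmem
    obtain ⟨k, hk⟩ := (decreasingPiBase_pr A).2.2 U hU hmem
    exact ⟨_, ⟨k, rfl⟩, hk⟩

lemma nhdBase_pl (n : ℕ) :
    IsNhdBase ((pl 𝓐 n : PsiSpace 𝓐) : OnePoint (PsiSpace 𝓐))
      ({({((pl 𝓐 n : PsiSpace 𝓐) : OnePoint (PsiSpace 𝓐))} : Set (OnePoint (PsiSpace 𝓐)))}) := by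
  constructor
  · rintro b rfl
    exact ⟨by rw [← Set.image_singleton]; exact OnePoint.isOpen_image_coe.2 (isOpen_singleton_pl n),
      rfl⟩
  · intro U hU hmem
    exact ⟨_, rfl, singleton_subset_iff.2 hmem⟩

/-- the canonical neighborhood base at ∞ -/
lemma nhdBase_infty (had : 𝓐.Pairwise fun A B => (A ∩ B).Finite) :
    IsNhdBase (∞ : OnePoint (PsiSpace 𝓐))
      (Set.range fun q : Finset ↥𝓐 × Finset ℕ => NN q.1 q.2) := by
  constructor
  · rintro b ⟨⟨Φ, F⟩, rfl⟩
    exact ⟨isOpen_NN had Φ F, infty_mem_NN Φ F⟩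
  · intro U hU hmem
    obtain ⟨Φ, F, h⟩ := exists_NN_subset hU hmem
    exact ⟨_, ⟨(Φ, F), rfl⟩, h⟩

/-- any neighborhood base at ∞ has size at least 𝔠 -/
lemma base_infty_ge (had : 𝓐.Pairwise fun A B => (A ∩ B).Finite)
    (hcard : #↥𝓐 = Cardinal.continuum)
    {𝓑 : Set (Set (OnePoint (PsiSpace 𝓐)))} (hB : IsNhdBase ∞ 𝓑) :
    Cardinal.continuum ≤ #↥𝓑 := by
  classical
  have hWb : ∀ A : ↥𝓐, ∃ b ∈ 𝓑, b ⊆ NN {A} ∅ :=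
    fun A => hB.2 (NN {A} ∅) (isOpen_NN had {A} ∅) (infty_mem_NN {A} ∅)
  choose b hb1 hb2 using hWb
  set f : ↥𝓐 → ↥𝓑 := fun A => ⟨b A, hb1 A⟩ with hf
  have hfib : ∀ c : ↥𝓑, (f ⁻¹' {c}).Finite := by
    intro c
    have hco : IsOpen (c : Set (OnePoint (PsiSpace 𝓐))) := (hB.1 c c.2).1
    have hcm : ∞ ∈ (c : Set (OnePoint (PsiSpace 𝓐))) := (hB.1 c c.2).2
    have hK : IsCompact (((↑) : PsiSpace 𝓐 → OnePoint (PsiSpace 𝓐)) ⁻¹' (c : Set _))ᶜ :=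
      ((OnePoint.isOpen_iff_of_mem' hcm).1 hco).1
    apply (finite_pr_of_compact hK).subset
    intro A hA
    have hbc : b A = (c : Set (OnePoint (PsiSpace 𝓐))) := congrArg Subtype.val hA
    intro hmem
    have h1 : ((pr A : PsiSpace 𝓐) : OnePoint (PsiSpace 𝓐)) ∈ NN {A} ∅ :=
      hb2 A (hbc ▸ hmem)
    rcases h1 with h | ⟨y, hy, hyeq⟩
    · exact (OnePoint.coe_ne_infty _) h
    · obtain rfl : y = pr A := OnePoint.coe_injective hyeq
      apply hy
      rw [MM]
      exact Or.inl (mem_iUnion₂.2 ⟨A, Finset.mem_singleton_self A, mem_insert _ _⟩)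
  have h1 : #↥𝓐 = Cardinal.sum fun c : ↥𝓑 => #↥(f ⁻¹' {c}) := by
    rw [← Cardinal.mk_sigma]
    exact Cardinal.mk_congr (Equiv.sigmaFiberEquiv f).symm
  have h2 : (Cardinal.sum fun c : ↥𝓑 => #↥(f ⁻¹' {c})) ≤
      Cardinal.sum fun _ : ↥𝓑 => ℵ₀ :=
    Cardinal.sum_le_sum _ _ (fun c => ((hfib c).lt_aleph0).le)
  have h3 : (Cardinal.sum fun _ : ↥𝓑 => ℵ₀) = #↥𝓑 * ℵ₀ := Cardinal.sum_const' _ _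
  have h4 : Cardinal.continuum ≤ #↥𝓑 * ℵ₀ := by
    rw [← hcard, h1]
    exact h2.trans_eq h3
  rcases le_or_gt (#↥𝓑) ℵ₀ with h | h
  · exfalso
    have : (#↥𝓑) * ℵ₀ ≤ ℵ₀ * ℵ₀ := mul_le_mul' h le_rfl
    rw [Cardinal.aleph0_mul_aleph0] at this
    exact absurd (h4.trans this) (not_le.2 Cardinal.aleph0_lt_continuum)
  · calc Cardinal.continuum ≤ #↥𝓑 * ℵ₀ := h4
      _ ≤ #↥𝓑 * #↥𝓑 := mul_le_mul' le_rfl h.le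
      _ = #↥𝓑 := Cardinal.mul_eq_self h.le


lemma chiAt_le_of_countable_base {X : Type u} [TopologicalSpace X] {p : X}
    {𝓑 : Set (Set X)} (h : IsNhdBase p 𝓑) (hc : 𝓑.Countable) : chiAt p ≤ ℵ₀ := by
  have h1 : sInf {c | ∃ 𝓑 : Set (Set X), IsNhdBase p 𝓑 ∧ #𝓑 = c} ≤ #↥𝓑 :=
    csInf_le' ⟨𝓑, h, rfl⟩
  have h2 : #↥𝓑 ≤ ℵ₀ := by
    haveI := hc.to_subtype
    exact Cardinal.mk_le_aleph0
  exact sup_le (h1.trans h2) le_rfl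

lemma chiAt_infty (had : 𝓐.Pairwise fun A B => (A ∩ B).Finite)
    (hcard : #↥𝓐 = Cardinal.continuum) :
    chiAt (∞ : OnePoint (PsiSpace 𝓐)) = Cardinal.continuum := by
  have hbase := nhdBase_infty (𝓐 := 𝓐) had
  have hle : #↥(Set.range fun q : Finset ↥𝓐 × Finset ℕ => NN q.1 q.2) ≤
      Cardinal.continuum := by
    refine Cardinal.mk_range_le.trans ?_
    haveI : Infinite ↥𝓐 := Cardinal.infinite_iff.2
      (by rw [hcard]; exact Cardinal.aleph0_le_continuum)
    rw [Cardinal.mk_prod, Cardinal.mk_finset_of_infinite, Cardinal.mk_finset_of_infinite,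
      Cardinal.lift_id, Cardinal.lift_id, hcard, Cardinal.mk_nat,
      Cardinal.continuum_mul_aleph0]
  have heq : #↥(Set.range fun q : Finset ↥𝓐 × Finset ℕ => NN q.1 q.2) =
      Cardinal.continuum := le_antisymm hle (base_infty_ge had hcard hbase)
  rw [chiAt]
  have h1 : sInf {c | ∃ 𝓑 : Set (Set (OnePoint (PsiSpace 𝓐))),
      IsNhdBase (∞ : OnePoint (PsiSpace 𝓐)) 𝓑 ∧ #↥𝓑 = c} = Cardinal.continuum := by
    refine le_antisymm (csInf_le' ⟨_, hbase, heq⟩)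
      (le_csInf ⟨_, ⟨_, hbase, heq⟩⟩ ?_)
    rintro c ⟨𝓑, hB, rfl⟩
    exact base_infty_ge had hcard hB
  rw [h1]
  exact sup_eq_left.2 Cardinal.aleph0_le_continuum

lemma iSup_chiAt (had : 𝓐.Pairwise fun A B => (A ∩ B).Finite)
    (hcard : #↥𝓐 = Cardinal.continuum) :
    (⨆ p : OnePoint (PsiSpace 𝓐), chiAt p) = Cardinal.continuum := by
  have hle : ∀ p : OnePoint (PsiSpace 𝓐), chiAt p ≤ Cardinal.continuum := by
    intro p
    induction p using OnePoint.rec with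
    | infty => exact (chiAt_infty had hcard).le
    | coe y =>
      match y with
      | Sum.inl n => exact (chiAt_le_of_countable_base (nhdBase_pl n)
          (countable_singleton _)).trans Cardinal.aleph0_le_continuum
      | Sum.inr A => exact (chiAt_le_of_countable_base (nhdBase_pr A)
          (countable_range _)).trans Cardinal.aleph0_le_continuum
  refine le_antisymm (ciSup_le' hle) ?_
  have h2 := le_ciSup (f := fun p : OnePoint (PsiSpace 𝓐) => chiAt p)
    ⟨Cardinal.continuum, by rintro c ⟨p, rfl⟩; exact hle p⟩ ∞
  rwa [chiAt_infty had hcard] at h2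

end PsiAux

/-- the one-point compactification `X` of a Ψ-space over a
non-maximal almost disjoint family `𝓐` of infinite subsets of ℕ with `|𝓐| = 𝔠`
is a separable compact Hausdorff (hence ccc) space in which every point has a
countable decreasing local π-base (so πχd(X) = ℵ₀) while χ(X) = 𝔠; hence
`2^{c(X)·πχd(X)} = 𝔠 < 2^𝔠 = 2^{c(X)·χ(X)}`. -/
theorem onePoint_psiSpace_example (𝓐 : Set (Set ℕ))
    (hinf : ∀ A ∈ 𝓐, A.Infinite)
    (had : 𝓐.Pairwise fun A B => (A ∩ B).Finite)
    (hnonmax : ∃ C : Set ℕ, C.Infinite ∧ C ∉ 𝓐 ∧ ∀ A ∈ 𝓐, (C ∩ A).Finite)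
    (hcard : #↥𝓐 = Cardinal.continuum) :
    TopologicalSpace.SeparableSpace (OnePoint (PsiSpace 𝓐)) ∧
    CompactSpace (OnePoint (PsiSpace 𝓐)) ∧
    T2Space (OnePoint (PsiSpace 𝓐)) ∧
    (∀ 𝓒 : Set (Set (OnePoint (PsiSpace 𝓐))), IsCellular 𝓒 → 𝓒.Countable) ∧
    (∀ p : OnePoint (PsiSpace 𝓐),
      ∃ A : ℕ → Set (OnePoint (PsiSpace 𝓐)), IsDecreasingLocalPiBase p A) ∧
    (⨆ p : OnePoint (PsiSpace 𝓐), chiAt p) = Cardinal.continuum ∧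
    (2 : Cardinal) ^ (ℵ₀ * ℵ₀) = Cardinal.continuum ∧
    Cardinal.continuum < (2 : Cardinal) ^ (ℵ₀ * Cardinal.continuum) := by
  classical
  haveI hT2 : T2Space (PsiSpace 𝓐) := PsiAux.t2 had
  haveI := PsiAux.weaklyLocallyCompact (𝓐 := 𝓐)
  haveI hsep : TopologicalSpace.SeparableSpace (OnePoint (PsiSpace 𝓐)) :=
    ⟨⟨_, (Set.countable_range _).insert _, PsiAux.dense_iso hinf⟩⟩
  refine ⟨hsep, inferInstance, inferInstance, ?_, ?_, ?_, ?_, ?_⟩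
  · intro 𝓒 h𝓒
    exact PsiAux.ccc_of_separable 𝓒 h𝓒
  · intro p
    induction p using OnePoint.rec with
    | infty =>
      obtain ⟨C, hCinf, _, hC⟩ := hnonmax
      exact ⟨_, PsiAux.decreasingPiBase_infty hCinf hC⟩
    | coe y =>
      match y with
      | Sum.inl n => exact ⟨_, PsiAux.decreasingPiBase_pl n⟩
      | Sum.inr A => exact ⟨_, PsiAux.decreasingPiBase_pr A⟩
  · exact PsiAux.iSup_chiAt had hcard
  · rw [Cardinal.aleph0_mul_aleph0]
    exact Cardinal.two_power_aleph0
  · rw [Cardinal.aleph0_mul_continuum]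
    exact Cardinal.cantor _
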